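/- arXiv:2106.08563 — 4 statements merged into one kernel-verified Lean document; each statement's English description precedes it below -/
import Mathlib

section
/- Let μ₀ be a probability measure on a measurable space (T, 𝒯), and μ₁ a finite measure absolutely continuous with respect to μ₀. Let 𝓕 be a sub-σ-algebra of 𝒯. If the strong completion of 𝓕 restricted to D within 𝒯 restricted to D under μ₀ differs from 𝒯 restricted to D for every D ∈ 𝒯 with μ₀(D) > 0 (nowhere equivalence under μ₀), and the density dμ₁/dμ₀ is strictly positive μ₀-a.e., then 𝒯 is nowhere equivalent to 𝓕 under μ₁. -/
open MeasureTheory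

/-- The restriction of a σ-algebra `m` to a set `D`: all sets of the form `D ∩ E`
with `E` `m`-measurable. -/
def restrictedSets {T : Type*} (m : MeasurableSpace T) (D : Set T) : Set (Set T) :=
  {S | ∃ E : Set T, MeasurableSet[m] E ∧ S = D ∩ E}

/-- The strong completion of `F` restricted to `D` within `m0` restricted to `D` under `P`:
sets of the form `E △ N` with `E ∈ F^D` and `N ∈ m0^D` `P`-null. -/
def strongCompletion {T : Type*} (F m0 : MeasurableSpace T) (P : @Measure T m0) (D : Set T) :
    Set (Set T) :=
  {S | ∃ E ∈ restrictedSets F D, ∃ N ∈ restrictedSets m0 D, P N = 0 ∧ S = symmDiff E N}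

/-- `m0` is nowhere equivalent to `F` under `P`: for every `m0`-measurable `D` of positive
measure, the strong completion of `F^D` within `m0^D` under `P` differs from `m0^D`. -/
def NowhereEquivalent {T : Type*} (m0 : MeasurableSpace T) (F : MeasurableSpace T)
    (P : @Measure T m0) : Prop :=
  ∀ D : Set T, MeasurableSet[m0] D → 0 < P D →
    strongCompletion F m0 P D ≠ restrictedSets m0 D

/-- If `𝒯` is nowhere equivalent to `F` under `μ₀`, and `μ₁ ≪ μ₀` with a.e. strictly
positive density, then `𝒯` is nowhere equivalent to `F` under `μ₁`. -/
theorem nowhereEquivalent_of_absolutelyContinuous_pos_density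
    {T : Type*} {m0 : MeasurableSpace T}
    (μ₀ : Measure T) [IsProbabilityMeasure μ₀]
    (μ₁ : Measure T) [IsFiniteMeasure μ₁] (hac : μ₁ ≪ μ₀)
    (F : MeasurableSpace T) (hF : F ≤ m0)
    (hne : NowhereEquivalent m0 F μ₀)
    (hpos : ∀ᵐ t ∂μ₀, 0 < μ₁.rnDeriv μ₀ t) :
    NowhereEquivalent m0 F μ₁ := by
  -- First show μ₀ ≪ μ₁.
  have h01 : μ₀ ≪ μ₁ := by
    intro s hs
    have heq : μ₀.withDensity (μ₁.rnDeriv μ₀) = μ₁ := Measure.withDensity_rnDeriv_eq μ₁ μ₀ hac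
    have h1 : μ₀.withDensity (μ₁.rnDeriv μ₀) s = 0 := by rw [heq]; exact hs
    rw [withDensity_apply_eq_zero (Measure.measurable_rnDeriv μ₁ μ₀)] at h1
    have h2 : μ₀ {x | μ₁.rnDeriv μ₀ x = 0} = 0 := by
      have := hpos
      rw [ae_iff] at this
      simpa [pos_iff_ne_zero, Classical.not_not] using this
    refine le_antisymm ?_ zero_le
    calc μ₀ s ≤ μ₀ ({x | μ₁.rnDeriv μ₀ x ≠ 0} ∩ s) + μ₀ {x | μ₁.rnDeriv μ₀ x = 0} := by
          refine le_trans (measure_mono ?_) (measure_union_le _ _)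
          intro x hx
          by_cases h : μ₁.rnDeriv μ₀ x = 0
          · exact Or.inr h
          · exact Or.inl ⟨h, hx⟩
      _ = 0 := by rw [h1, h2, add_zero]
  -- Null sets coincide, so everything transfers.
  have hnull : ∀ N : Set T, μ₁ N = 0 ↔ μ₀ N = 0 := fun N => ⟨fun h => h01 h, fun h => hac h⟩
  intro D hD hD1
  have hD0 : 0 < μ₀ D := by
    rw [pos_iff_ne_zero]
    intro h
    exact hD1.ne' ((hnull D).mpr h)
  have hsc : strongCompletion F m0 μ₁ D = strongCompletion F m0 μ₀ D := by
    ext S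
    simp only [strongCompletion, Set.mem_setOf_eq]
    constructor
    · rintro ⟨E, hE, N, hN, hN0, rfl⟩
      exact ⟨E, hE, N, hN, (hnull N).mp hN0, rfl⟩
    · rintro ⟨E, hE, N, hN, hN0, rfl⟩
      exact ⟨E, hE, N, hN, (hnull N).mpr hN0, rfl⟩
  rw [hsc]
  exact hne D hD hD0
end

section
/- Let (T, 𝒯, μ) be an atomless probability space and 𝓕 ⊆ 𝒯 a sub-σ-algebra. Suppose that for every m ≥ 2 there exists a 𝒯-measurable partition {E₁, …, E_m} of T such that μ(E_k) = 1/m and each E_k is independent of 𝓕 under μ (i.e., μ(E_k ∩ F) = μ(E_k)·μ(F) for all F ∈ 𝓕). Then 𝒯 is nowhere equivalent to 𝓕 under μ. -/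
open MeasureTheory

/-- If for every `m ≥ 2` there is a measurable partition of `T` into `m` sets of measure
`1/m`, each independent of the sub-σ-algebra `F`, then `𝒯` is nowhere equivalent to `F`. -/
theorem nowhereEquivalent_of_asymptotic_independent_supplement
    {T : Type*} {m0 : MeasurableSpace T}
    (μ : Measure T) [IsProbabilityMeasure μ] (hatomless : NoAtoms μ)
    (F : MeasurableSpace T) (hF : F ≤ m0)
    (hsupp : ∀ m : ℕ, 2 ≤ m → ∃ E : Fin m → Set T,
      (∀ k, MeasurableSet[m0] (E k)) ∧
      Pairwise (fun k l => Disjoint (E k) (E l)) ∧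
      (⋃ k, E k) = Set.univ ∧
      (∀ k, μ (E k) = (m : ENNReal)⁻¹) ∧
      (∀ k, ∀ G : Set T, MeasurableSet[F] G → μ (E k ∩ G) = μ (E k) * μ G)) :
    NowhereEquivalent m0 F μ := by
  intro D hD hDpos h
  obtain ⟨n, hn⟩ := ENNReal.exists_inv_nat_lt (ne_of_gt hDpos)
  obtain ⟨E, hEmeas, hEdisj, hEuniv, hEμ, hEind⟩ := hsupp (n + 2) (by omega)
  have hmem : ∀ k : Fin (n + 2), ∃ G : Set T, MeasurableSet[F] G ∧
      μ ((D ∩ E k) \ (D ∩ G)) = 0 ∧ μ ((D ∩ G) \ (D ∩ E k)) = 0 := by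
    intro k
    have hk : D ∩ E k ∈ strongCompletion F m0 μ D := by
      rw [h]; exact ⟨E k, hEmeas k, rfl⟩
    obtain ⟨A, ⟨G, hG, rfl⟩, N, -, hN0, hS⟩ := hk
    refine ⟨G, hG, measure_mono_null ?_ hN0, measure_mono_null ?_ hN0⟩
    · rintro x ⟨hx1, hx2⟩
      rw [hS] at hx1
      rcases Set.mem_symmDiff.mp hx1 with ⟨h1, -⟩ | ⟨h1, -⟩
      · exact absurd h1 hx2
      · exact h1
    · rintro x ⟨hx1, hx2⟩
      rw [hS] at hx2
      by_contra hxN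
      exact hx2 (Set.mem_symmDiff.mpr (Or.inl ⟨hx1, hxN⟩))
  choose G hG h1 h2 using hmem
  set Gd : Fin (n + 2) → Set T :=
    fun k => G k \ ⋃ l : Fin (n + 2), ⋃ _ : l < k, G l with hGdDef
  have hGdmeas : ∀ k, MeasurableSet[F] (Gd k) := fun k =>
    (hG k).diff (MeasurableSet.iUnion fun l => MeasurableSet.iUnion fun _ => hG l)
  have hGddisj : Pairwise (Function.onFun Disjoint Gd) := by
    intro k l hkl
    rcases hkl.lt_or_gt with hlt | hlt
    · refine Set.disjoint_left.mpr ?_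
      rintro x ⟨hxk, -⟩ ⟨-, hxl⟩
      exact hxl (Set.mem_iUnion.mpr ⟨k, Set.mem_iUnion.mpr ⟨hlt, hxk⟩⟩)
    · refine Set.disjoint_left.mpr ?_
      rintro x ⟨-, hxk⟩ ⟨hxl, -⟩
      exact hxk (Set.mem_iUnion.mpr ⟨l, Set.mem_iUnion.mpr ⟨hlt, hxl⟩⟩)
  have hnull : ∀ k l : Fin (n + 2), l ≠ k → μ (D ∩ G k ∩ G l) = 0 := by
    intro k l hne
    refine measure_mono_null ?_ (measure_union_null (h2 k) (h2 l))
    rintro x ⟨⟨hxD, hxk⟩, hxl⟩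
    by_cases hk : x ∈ E k
    · by_cases hl : x ∈ E l
      · exact absurd hl (Set.disjoint_left.mp (hEdisj hne.symm) hk)
      · exact Or.inr ⟨⟨hxD, hxl⟩, fun hc => hl hc.2⟩
    · exact Or.inl ⟨⟨hxD, hxk⟩, fun hc => hk hc.2⟩
  have hkey : ∀ k, μ (D ∩ E k) ≤ ((n + 2 : ℕ) : ENNReal)⁻¹ * μ (Gd k) := by
    intro k
    have hsub : D ∩ E k ⊆ (E k ∩ Gd k) ∪ (((D ∩ E k) \ (D ∩ G k)) ∪
        ⋃ l : Fin (n + 2), ⋃ _ : l < k, D ∩ G k ∩ G l) := by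
      rintro x ⟨hxD, hxE⟩
      by_cases hxG : x ∈ G k
      · by_cases hxGd : x ∈ Gd k
        · exact Or.inl ⟨hxE, hxGd⟩
        · have hmem : x ∈ ⋃ l : Fin (n + 2), ⋃ _ : l < k, G l := by
            by_contra hc
            exact hxGd ⟨hxG, hc⟩
          obtain ⟨l, hl⟩ := Set.mem_iUnion.mp hmem
          obtain ⟨hlk, hxl⟩ := Set.mem_iUnion.mp hl
          exact Or.inr (Or.inr (Set.mem_iUnion.mpr
            ⟨l, Set.mem_iUnion.mpr ⟨hlk, ⟨⟨hxD, hxG⟩, hxl⟩⟩⟩))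
      · exact Or.inr (Or.inl ⟨⟨hxD, hxE⟩, fun hc => hxG hc.2⟩)
    have hz : μ (((D ∩ E k) \ (D ∩ G k)) ∪
        ⋃ l : Fin (n + 2), ⋃ _ : l < k, D ∩ G k ∩ G l) = 0 := by
      refine measure_union_null (h1 k) ?_
      exact measure_iUnion_null fun l =>
        measure_iUnion_null fun hlk => hnull k l (ne_of_lt hlk)
    calc μ (D ∩ E k) ≤ μ ((E k ∩ Gd k) ∪ (((D ∩ E k) \ (D ∩ G k)) ∪
          ⋃ l : Fin (n + 2), ⋃ _ : l < k, D ∩ G k ∩ G l)) := measure_mono hsub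
      _ ≤ μ (E k ∩ Gd k) + μ (((D ∩ E k) \ (D ∩ G k)) ∪
          ⋃ l : Fin (n + 2), ⋃ _ : l < k, D ∩ G k ∩ G l) := measure_union_le _ _
      _ = μ (E k ∩ Gd k) := by rw [hz, add_zero]
      _ = μ (E k) * μ (Gd k) := hEind k _ (hGdmeas k)
      _ = ((n + 2 : ℕ) : ENNReal)⁻¹ * μ (Gd k) := by rw [hEμ k]
  have hD1 : μ D ≤ ((n + 2 : ℕ) : ENNReal)⁻¹ := by
    calc μ D = μ (⋃ k, D ∩ E k) := by
          rw [← Set.inter_iUnion, hEuniv, Set.inter_univ]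
      _ ≤ ∑' k, μ (D ∩ E k) := measure_iUnion_le _
      _ ≤ ∑' k, ((n + 2 : ℕ) : ENNReal)⁻¹ * μ (Gd k) := ENNReal.tsum_le_tsum hkey
      _ = ((n + 2 : ℕ) : ENNReal)⁻¹ * ∑' k, μ (Gd k) := ENNReal.tsum_mul_left
      _ = ((n + 2 : ℕ) : ENNReal)⁻¹ * μ (⋃ k, Gd k) := by
          rw [measure_iUnion hGddisj (fun k => hF _ (hGdmeas k))]
      _ ≤ ((n + 2 : ℕ) : ENNReal)⁻¹ * 1 := by gcongr; exact prob_le_one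
      _ = ((n + 2 : ℕ) : ENNReal)⁻¹ := mul_one _
  have hle : ((n + 2 : ℕ) : ENNReal)⁻¹ ≤ ((n : ℕ) : ENNReal)⁻¹ := by
    gcongr
    exact_mod_cast Nat.le_add_right n 2
  exact absurd hn (not_lt.mpr (hD1.trans hle))
end

section
/- With the same construction as above, for every s₂ ∈ ∪_k B(a_k, r) and every s₁ ∈ B(a₁, r) \ {a₁}, we have u₁(a₁, s₂) > u₁(s₁, s₂); i.e., within the ball B(a₁, r), the center a₁ strictly dominates every other action for player 1. -/
open Metric Finset

/-- In the auxiliary game, within the ball B(a₁, r) the center a₁ strictly dominates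
every other action for player 1, against any opponent action in ∪_k B(a_k, r). -/
theorem center_strictly_dominates_in_ball
    {X : Type*} [MetricSpace X] [CompactSpace X]
    {m : ℕ} [NeZero m] (hm : 2 ≤ m) (a : Fin m → X) (ha : Function.Injective a)
    (r : ℝ) (hr : r ∈ Set.Ioo (0 : ℝ) 1)
    (hdisj : Pairwise (fun k l => Disjoint (closedBall (a k) r) (closedBall (a l) r)))
    (β : Fin m → X → ℝ) (γ : X → ℝ)
    (hβcont : ∀ k, Continuous (β k)) (hγcont : Continuous γ)
    (hβrange : ∀ k x, β k x ∈ Set.Icc (0 : ℝ) 1)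
    (hγrange : ∀ x, γ x ∈ Set.Icc (-5 : ℝ) 0)
    (hβone : ∀ k, ∀ x ∈ closedBall (a k) (r / 2), β k x = 1)
    (hβzero : ∀ k, ∀ x ∉ ball (a k) r, β k x = 0)
    (hβmid : ∀ k, ∀ x ∈ ball (a k) r \ closedBall (a k) (r / 2), β k x ∈ Set.Ioo (0 : ℝ) 1)
    (hγzero : ∀ x ∈ ⋃ k, closedBall (a k) (r / 2), γ x = 0)
    (hγneg : ∀ x ∉ ⋃ k, ball (a k) r, γ x = -5)
    (u₁ : X → X → ℝ)
    (hu₁ : ∀ s₁ s₂, u₁ s₁ s₂ =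
      (∑ k, β k s₁ * β k s₂ * (3 - dist s₁ (a k)))
      + (∑ k, β k s₁ * β (k + 1) s₂ * (1 - dist s₁ (a k)))
      + (∑ k, ∑ l ∈ univ.filter (fun l => l ≠ k ∧ l ≠ k + 1),
          β k s₁ * β l s₂ * (2 - dist s₁ (a k)))
      + γ s₁ - 2) :
    ∀ s₂ ∈ ⋃ k, ball (a k) r, ∀ s₁ ∈ ball (a 0) r \ {a 0},
      u₁ (a 0) s₂ > u₁ s₁ s₂ := by

  intro s₂ hs₂ s₁ hs₁
  obtain ⟨hs₁ball, hs₁ne⟩ := hs₁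
  have hr0 : (0:ℝ) < r := hr.1
  have hr1 : r < 1 := hr.2
  have hne : s₁ ≠ a 0 := fun h => hs₁ne h
  have hd0 : 0 < dist s₁ (a 0) := dist_pos.2 hne
  have hdr : dist s₁ (a 0) < r := mem_ball.1 hs₁ball
  -- β vanishes on ball 0 for other indices
  have hβout : ∀ k : Fin m, k ≠ 0 → ∀ x ∈ closedBall (a 0) r, β k x = 0 := by
    intro k hk x hx
    apply hβzero
    intro hmem
    exact Set.disjoint_left.mp (hdisj (Ne.symm hk)) hx (ball_subset_closedBall hmem)
  have hβpos : ∀ (k : Fin m) (x : X), x ∈ ball (a k) r → 0 < β k x := by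
    intro k x hx
    by_cases hx2 : x ∈ closedBall (a k) (r/2)
    · rw [hβone k x hx2]; norm_num
    · exact (hβmid k x ⟨hx, hx2⟩).1
  have ha0mem : a 0 ∈ closedBall (a 0) r := mem_closedBall_self hr0.le
  have hs₁mem : s₁ ∈ closedBall (a 0) r := ball_subset_closedBall hs₁ball
  have hβa0 : β 0 (a 0) = 1 := hβone 0 (a 0) (mem_closedBall_self (by linarith))
  have hγa0 : γ (a 0) = 0 := hγzero (a 0)
    (Set.mem_iUnion.2 ⟨0, mem_closedBall_self (by linarith)⟩)
  have hγs₁ : γ s₁ ≤ 0 := (hγrange s₁).2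
  set d := dist s₁ (a 0) with hd
  set b := β 0 s₁ with hb
  have hb0 : 0 < b := hβpos 0 s₁ hs₁ball
  have hb1 : b ≤ 1 := (hβrange 0 s₁).2
  set F := univ.filter (fun l : Fin m => l ≠ 0 ∧ l ≠ 0 + 1) with hF
  set T := ∑ l ∈ F, β l s₂ with hT
  set S0 := β 0 s₂ with hS0
  set S1 := β (0 + 1) s₂ with hS1
  have hS0nn : 0 ≤ S0 := (hβrange 0 s₂).1
  have hS1nn : 0 ≤ S1 := (hβrange (0+1) s₂).1
  have hTnn : 0 ≤ T := Finset.sum_nonneg fun l _ => (hβrange l s₂).1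
  -- sum simplifications
  have sumA : ∀ (x : X) (g : Fin m → ℝ),
      (∑ k, β k x * g k) = β 0 x * g 0 → True := fun _ _ _ => trivial
  have dista0 : dist (a 0) (a 0) = 0 := dist_self _
  have eA : u₁ (a 0) s₂ = 3 * S0 + S1 + 2 * T - 2 := by
    rw [hu₁]
    rw [Finset.sum_eq_single 0 (fun k _ hk => by rw [hβout k hk (a 0) ha0mem]; ring)
      (fun h => absurd (mem_univ 0) h)]
    rw [Finset.sum_eq_single 0 (fun k _ hk => by rw [hβout k hk (a 0) ha0mem]; ring)
      (fun h => absurd (mem_univ 0) h)]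
    rw [Finset.sum_eq_single 0
      (fun k _ hk => Finset.sum_eq_zero fun l _ => by rw [hβout k hk (a 0) ha0mem]; ring)
      (fun h => absurd (mem_univ 0) h)]
    have : ∑ l ∈ F, β 0 (a 0) * β l s₂ * (2 - dist (a 0) (a 0)) = 2 * T := by
      rw [hT, Finset.mul_sum]
      exact Finset.sum_congr rfl fun l _ => by rw [hβa0, dista0]; ring
    rw [this, hβa0, hγa0, dista0]
    ring
  have eB : u₁ s₁ s₂ = b * S0 * (3 - d) + b * S1 * (1 - d) + b * (2 - d) * T + γ s₁ - 2 := by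
    rw [hu₁]
    rw [Finset.sum_eq_single 0 (fun k _ hk => by rw [hβout k hk s₁ hs₁mem]; ring)
      (fun h => absurd (mem_univ 0) h)]
    rw [Finset.sum_eq_single 0 (fun k _ hk => by rw [hβout k hk s₁ hs₁mem]; ring)
      (fun h => absurd (mem_univ 0) h)]
    rw [Finset.sum_eq_single 0
      (fun k _ hk => Finset.sum_eq_zero fun l _ => by rw [hβout k hk s₁ hs₁mem]; ring)
      (fun h => absurd (mem_univ 0) h)]
    have : ∑ l ∈ F, β 0 s₁ * β l s₂ * (2 - dist s₁ (a 0)) = b * (2 - d) * T := by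
      rw [hT, Finset.mul_sum]
      exact Finset.sum_congr rfl fun l _ => by ring
    rw [this]
  -- positivity of S0 + S1 + T
  obtain ⟨j, hj⟩ := Set.mem_iUnion.1 hs₂
  have hjpos : 0 < β j s₂ := hβpos j s₂ hj
  have hpos : 0 < S0 + S1 + T := by
    by_cases hj0 : j = 0
    · subst hj0; nlinarith
    by_cases hj1 : j = 0 + 1
    · subst hj1; nlinarith
    · have hjF : j ∈ F := by rw [hF, Finset.mem_filter]; exact ⟨mem_univ j, hj0, hj1⟩
      have : β j s₂ ≤ T := Finset.single_le_sum (fun l _ => (hβrange l s₂).1) hjF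
      nlinarith
  rw [eA, eB]
  nlinarith [mul_nonneg (mul_nonneg (sub_nonneg.2 hb1) (by linarith : (0:ℝ) ≤ 3 - d)) hS0nn,
    mul_nonneg (mul_nonneg (sub_nonneg.2 hb1) (by linarith : (0:ℝ) ≤ 1 - d)) hS1nn,
    mul_nonneg (mul_nonneg (sub_nonneg.2 hb1) (by linarith : (0:ℝ) ≤ 2 - d)) hTnn,
    mul_pos hd0 hpos]
end

section
/- Let (T, 𝒯, λ) be a probability space, φ : T → [0,1] measure-preserving to Lebesgue measure η, m ≥ 2, and f : T → [0, m] measurable with λ∘f⁻¹ equal to the uniform distribution on [0,m] and f(t) ∈ {φ(t), φ(t)+1, …, φ(t)+m−1} for λ-a.e. t. Define C_j = {t : f(t) = φ(t) + j} (up to a null set, {C₀,…,C_{m−1}} partitions T). Then for every Borel set E' ⊆ [0,1] and each j, λ(C_j ∩ φ⁻¹(E')) = (1/m)·η(E'). In particular λ(C_j) = 1/m and each C_j is independent of the σ-algebra φ⁻¹(𝓑([0,1])). -/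
open MeasureTheory

/-- If φ : T → [0,1] is measure-preserving to Lebesgue measure η, f is distributed
uniformly on [0,m], and a.e. f(t) = φ(t) + j for some j < m, then with
C_j = {t : f(t) = φ(t) + j}: for every Borel E' ⊆ [0,1],
λ(C_j ∩ φ⁻¹(E')) = η(E')/m; in particular λ(C_j) = 1/m and each C_j is
independent of the σ-algebra generated by φ. -/
theorem purification_partition_independent
    {T : Type*} [MeasurableSpace T] (lam : Measure T) [IsProbabilityMeasure lam]
    (m : ℕ) (hm : 2 ≤ m)
    (φ : T → ℝ) (hφ : Measurable φ)
    (hφ_mp : lam.map φ = volume.restrict (Set.Icc (0 : ℝ) 1))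
    (f : T → ℝ) (hf : Measurable f)
    (hf_unif : lam.map f = (m : ENNReal)⁻¹ • volume.restrict (Set.Icc (0 : ℝ) m))
    (hf_supp : ∀ᵐ t ∂lam, ∃ j : ℕ, j < m ∧ f t = φ t + j)
    (C : ℕ → Set T) (hC : ∀ j, C j = {t | f t = φ t + j}) :
    (∀ j < m, ∀ E' : Set ℝ, MeasurableSet E' → E' ⊆ Set.Icc (0 : ℝ) 1 →
      lam (C j ∩ φ ⁻¹' E') = (m : ENNReal)⁻¹ * volume.restrict (Set.Icc (0 : ℝ) 1) E') ∧
    (∀ j < m, lam (C j) = (m : ENNReal)⁻¹) ∧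
    (∀ j < m, ∀ E' : Set ℝ, MeasurableSet E' →
      lam (C j ∩ φ ⁻¹' E') = lam (C j) * lam (φ ⁻¹' E')) := by
  -- a.e., φ t ∈ (0,1)
  have hφIoo : ∀ᵐ t ∂lam, φ t ∈ Set.Ioo (0 : ℝ) 1 := by
    rw [ae_iff]
    have hset : {t | ¬ φ t ∈ Set.Ioo (0:ℝ) 1} = φ ⁻¹' (Set.Ioo (0:ℝ) 1)ᶜ := rfl
    rw [hset, ← Measure.map_apply hφ measurableSet_Ioo.compl, hφ_mp,
      Measure.restrict_apply measurableSet_Ioo.compl]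
    have hsub : (Set.Ioo (0:ℝ) 1)ᶜ ∩ Set.Icc 0 1 ⊆ ({0, 1} : Set ℝ) := by
      intro x ⟨hx1, hx2⟩
      simp only [Set.mem_compl_iff, Set.mem_Ioo, not_and_or, not_lt] at hx1
      rcases hx1 with h | h
      · left; exact le_antisymm h hx2.1
      · right; exact le_antisymm hx2.2 h
    refine measure_mono_null hsub ?_
    exact Set.Finite.measure_zero (Set.toFinite _) volume
  -- key computation, with plain volume on the RHS
  have key : ∀ j, j < m → ∀ E' : Set ℝ, MeasurableSet E' → E' ⊆ Set.Icc (0:ℝ) 1 →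
      lam (C j ∩ φ ⁻¹' E') = (m : ENNReal)⁻¹ * volume E' := by
    intro j hj E' hE' hEsub
    set S : Set ℝ := (fun x => x + (-(j:ℝ))) ⁻¹' E' with hSdef
    have hSmeas : MeasurableSet S := (measurable_add_const _) hE'
    have haeq : (C j ∩ φ ⁻¹' E' : Set T) =ᵐ[lam] f ⁻¹' S := by
      rw [Filter.eventuallyEq_set]
      filter_upwards [hf_supp, hφIoo] with t ht hIoo
      constructor
      · rintro ⟨hCj, hE⟩
        rw [hC] at hCj
        simp only [Set.mem_setOf_eq] at hCj
        simp only [Set.mem_preimage, hSdef, hCj]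
        have : φ t + (j:ℝ) + (-(j:ℝ)) = φ t := by ring
        rw [this]
        exact hE
      · intro hfS
        obtain ⟨k, hk, hfk⟩ := ht
        have hx : f t + (-(j:ℝ)) ∈ E' := hfS
        have hxmem := hEsub hx
        rw [hfk] at hx hxmem
        -- φ t + k - j ∈ [0,1], φ t ∈ (0,1) ⇒ k = j
        have h0 : (0:ℝ) ≤ φ t + k + (-(j:ℝ)) := hxmem.1
        have h1 : φ t + k + (-(j:ℝ)) ≤ 1 := hxmem.2
        have hkj : k = j := by
          have hklt : (k:ℝ) < (j:ℝ) + 1 := by linarith [hIoo.1]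
          have hjlt : (j:ℝ) < (k:ℝ) + 1 := by linarith [hIoo.2]
          have h1 : k < j + 1 := by exact_mod_cast (by push_cast; linarith : (k:ℝ) < ((j+1:ℕ):ℝ))
          have h2 : j < k + 1 := by exact_mod_cast (by push_cast; linarith : (j:ℝ) < ((k+1:ℕ):ℝ))
          omega
        subst hkj
        refine ⟨?_, ?_⟩
        · rw [hC]; exact hfk
        · have : φ t + (k:ℝ) + (-(k:ℝ)) = φ t := by ring
          rw [this] at hx
          exact hx
    rw [measure_congr haeq, ← Measure.map_apply hf hSmeas, hf_unif]
    simp only [Measure.smul_apply, smul_eq_mul, Measure.restrict_apply hSmeas]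
    congr 1
    have hSsub : S ∩ Set.Icc (0:ℝ) m = S := by
      apply Set.inter_eq_left.mpr
      intro x hx
      have hxE : (0:ℝ) ≤ x - j ∧ x - (j:ℝ) ≤ 1 := by
        simpa [sub_eq_add_neg, Set.mem_Icc] using hEsub hx
      have hjm : (j:ℝ) + 1 ≤ (m:ℝ) := by exact_mod_cast Nat.succ_le_of_lt hj
      have hj0 : (0:ℝ) ≤ (j:ℝ) := Nat.cast_nonneg j
      exact ⟨by linarith [hxE.1], by linarith [hxE.2]⟩
    rw [hSsub, hSdef]
    exact measure_preimage_add_right volume (-(j:ℝ)) E'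
  -- λ (C j) = 1/m
  have hCj : ∀ j, j < m → lam (C j) = (m : ENNReal)⁻¹ := by
    intro j hj
    have h1 := key j hj (Set.Icc 0 1) measurableSet_Icc subset_rfl
    have haeq : (C j ∩ φ ⁻¹' Set.Icc (0:ℝ) 1 : Set T) =ᵐ[lam] C j := by
      rw [Filter.eventuallyEq_set]
      filter_upwards [hφIoo] with t hIoo
      have : φ t ∈ Set.Icc (0:ℝ) 1 := ⟨le_of_lt hIoo.1, le_of_lt hIoo.2⟩
      simp [this]
    rw [measure_congr haeq] at h1
    rw [h1]
    simp [Real.volume_Icc]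
  refine ⟨?_, hCj, ?_⟩
  · intro j hj E' hE' hEsub
    rw [key j hj E' hE' hEsub, Measure.restrict_apply hE', Set.inter_eq_left.mpr hEsub]
  · intro j hj E' hE'
    set E₀ : Set ℝ := E' ∩ Set.Icc 0 1 with hE₀def
    have hE₀ : MeasurableSet E₀ := hE'.inter measurableSet_Icc
    have haeq : (C j ∩ φ ⁻¹' E' : Set T) =ᵐ[lam] (C j ∩ φ ⁻¹' E₀ : Set T) := by
      rw [Filter.eventuallyEq_set]
      filter_upwards [hφIoo] with t hIoo
      have : φ t ∈ Set.Icc (0:ℝ) 1 := ⟨le_of_lt hIoo.1, le_of_lt hIoo.2⟩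
      constructor
      · rintro ⟨h1, h2⟩; exact ⟨h1, h2, this⟩
      · rintro ⟨h1, h2, _⟩; exact ⟨h1, h2⟩
    have hφE : lam (φ ⁻¹' E') = volume E₀ := by
      rw [← Measure.map_apply hφ hE', hφ_mp, Measure.restrict_apply hE']
    rw [measure_congr haeq, key j hj E₀ hE₀ Set.inter_subset_right, hCj j hj, hφE]
end
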